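/- Let ρ be a d×d complex positive semidefinite matrix with trace 1 and let A_1, …, A_N (N ≥ 2) be d×d Hermitian matrices. Then ∑_{i=1}^N Δ²_ρ(A_i) ≥ (1/N) · Δ²_ρ(∑_{i=1}^N A_i) + (2/(N²(N − 1))) · (∑_{1 ≤ i < j ≤ N} Δ_ρ(A_i − A_j))². -/

import Mathlib

open Matrix Finset
open scoped ComplexOrder

/-- The variance `Δ²_ρ(A) = Tr(ρ A²) − (Tr(ρ A))²` (a real number). -/
noncomputable def matVar {d : ℕ} (ρ A : Matrix (Fin d) (Fin d) ℂ) : ℝ :=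
  ((ρ * (A * A)).trace - ((ρ * A).trace) ^ 2).re

/-- The standard deviation `Δ_ρ(A) = √(Δ²_ρ(A))`. -/
noncomputable def matDev {d : ℕ} (ρ A : Matrix (Fin d) (Fin d) ℂ) : ℝ :=
  Real.sqrt (matVar ρ A)

section Aux

variable {d : ℕ}

lemma psd_trace_nonneg' {M : Matrix (Fin d) (Fin d) ℂ} (hM : M.PosSemidef) : 0 ≤ M.trace := by
  apply Finset.sum_nonneg
  intro i _
  exact hM.diag_nonneg

open scoped MatrixOrder in
lemma trace_mul_psd_nonneg' {ρ M : Matrix (Fin d) (Fin d) ℂ} (hρ : ρ.PosSemidef)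
    (hM : M.PosSemidef) : 0 ≤ (ρ * M).trace := by
  obtain ⟨B, hB⟩ := (CStarAlgebra.nonneg_iff_eq_star_mul_self).mp hρ.nonneg
  rw [hB, Matrix.mul_assoc, trace_mul_comm]
  exact psd_trace_nonneg' (hM.mul_mul_conjTranspose_same B)

lemma trace_mul_herm_real' {ρ A : Matrix (Fin d) (Fin d) ℂ}
    (hρ : ρ.IsHermitian) (hA : A.IsHermitian) :
    (starRingEnd ℂ) ((ρ * A).trace) = (ρ * A).trace := by
  calc (starRingEnd ℂ) ((ρ * A).trace) = ((ρ * A)ᴴ).trace := by rw [trace_conjTranspose]; rfl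
  _ = (Aᴴ * ρᴴ).trace := by rw [conjTranspose_mul]
  _ = (ρ * A).trace := by rw [hρ.eq, hA.eq, trace_mul_comm]

lemma matVar_nonneg' {ρ A : Matrix (Fin d) (Fin d) ℂ}
    (hρ : ρ.PosSemidef) (hTr : ρ.trace = 1) (hA : A.IsHermitian) : 0 ≤ matVar ρ A := by
  set t : ℂ := (ρ * A).trace with ht
  set B : Matrix (Fin d) (Fin d) ℂ := A - t • (1 : Matrix (Fin d) (Fin d) ℂ) with hBdef
  have hstar : star t = t := trace_mul_herm_real' hρ.1 hA
  have hB : B.IsHermitian := by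
    unfold Matrix.IsHermitian
    rw [hBdef, conjTranspose_sub, conjTranspose_smul, hA.eq, conjTranspose_one, hstar]
  have hBB : (B * B).PosSemidef := by
    have := Matrix.posSemidef_conjTranspose_mul_self B
    rwa [hB.eq] at this
  have key : (ρ * (B * B)).trace = (ρ * (A * A)).trace - t ^ 2 := by
    rw [hBdef]
    simp only [Matrix.mul_sub, Matrix.sub_mul, Matrix.mul_smul, Matrix.smul_mul,
      Matrix.mul_one, Matrix.one_mul, trace_sub, trace_smul, smul_eq_mul, hTr, ← ht]
    ring
  have h0 : 0 ≤ (ρ * (B * B)).trace := trace_mul_psd_nonneg' hρ hBB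
  rw [key] at h0
  have := (Complex.le_def.mp h0).1
  simpa [matVar] using this

noncomputable def Fc (ρ A : Matrix (Fin d) (Fin d) ℂ) : ℂ :=
  (ρ * (A * A)).trace - ((ρ * A).trace) ^ 2

noncomputable def Gc (ρ X Y : Matrix (Fin d) (Fin d) ℂ) : ℂ :=
  (ρ * (X * Y)).trace + (ρ * (Y * X)).trace - 2 * (ρ * X).trace * (ρ * Y).trace

lemma Fc_sub (ρ X Y : Matrix (Fin d) (Fin d) ℂ) :
    Fc ρ (X - Y) = Fc ρ X + Fc ρ Y - Gc ρ X Y := by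
  simp only [Fc, Gc, Matrix.mul_sub, Matrix.sub_mul, trace_sub]
  ring

lemma Gc_sum_right {N : ℕ} (ρ X : Matrix (Fin d) (Fin d) ℂ) (Y : Fin N → Matrix (Fin d) (Fin d) ℂ) :
    Gc ρ X (∑ j, Y j) = ∑ j, Gc ρ X (Y j) := by
  simp only [Gc, Matrix.mul_sum, Matrix.sum_mul, trace_sum, Finset.mul_sum,
    Finset.sum_add_distrib, Finset.sum_sub_distrib]

lemma Gc_sum_left {N : ℕ} (ρ Y : Matrix (Fin d) (Fin d) ℂ) (X : Fin N → Matrix (Fin d) (Fin d) ℂ) :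
    Gc ρ (∑ i, X i) Y = ∑ i, Gc ρ (X i) Y := by
  simp only [Gc, Matrix.mul_sum, Matrix.sum_mul, trace_sum, Finset.mul_sum, Finset.sum_mul,
    Finset.sum_add_distrib, Finset.sum_sub_distrib]

lemma Gc_self (ρ S : Matrix (Fin d) (Fin d) ℂ) : Gc ρ S S = 2 * Fc ρ S := by
  simp only [Gc, Fc]; ring

lemma sum_sum_Fc {N : ℕ} (ρ : Matrix (Fin d) (Fin d) ℂ) (A : Fin N → Matrix (Fin d) (Fin d) ℂ) :
    ∑ p : Fin N × Fin N, Fc ρ (A p.1 - A p.2)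
      = (2 * N) * (∑ i, Fc ρ (A i)) - 2 * Fc ρ (∑ i, A i) := by
  have h1 : ∑ p : Fin N × Fin N, Fc ρ (A p.1 - A p.2)
      = ∑ i : Fin N, ∑ j : Fin N, Fc ρ (A i - A j) := by
    rw [← Finset.univ_product_univ, Finset.sum_product]
  rw [h1]
  have expand : ∀ i : Fin N, ∑ j : Fin N, Fc ρ (A i - A j)
      = (N : ℂ) * Fc ρ (A i) + (∑ j, Fc ρ (A j)) - Gc ρ (A i) (∑ j, A j) := by
    intro i
    rw [Gc_sum_right]
    simp only [Fc_sub, Finset.sum_sub_distrib, Finset.sum_add_distrib, Finset.sum_const,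
      card_univ, Fintype.card_fin, nsmul_eq_mul]
  simp only [expand]
  rw [Finset.sum_sub_distrib, Finset.sum_add_distrib, ← Gc_sum_left, Gc_self,
    Finset.sum_const, card_univ, Fintype.card_fin, nsmul_eq_mul, ← Finset.mul_sum]
  ring

lemma split_sum' {N : ℕ} {M : Type*} [AddCommMonoid M] (f : Fin N × Fin N → M) :
    ∑ p : Fin N × Fin N, f p
      = (∑ p ∈ univ.filter (fun p : Fin N × Fin N => p.1 < p.2), f p)
        + (∑ p ∈ univ.filter (fun p : Fin N × Fin N => p.2 < p.1), f p)
        + ∑ i : Fin N, f (i, i) := by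
  rw [← Finset.sum_filter_add_sum_filter_not univ (fun p : Fin N × Fin N => p.1 < p.2) f,
    ← Finset.sum_filter_add_sum_filter_not (univ.filter (fun p : Fin N × Fin N => ¬ p.1 < p.2))
      (fun p : Fin N × Fin N => p.2 < p.1) f, Finset.filter_filter, Finset.filter_filter]
  rw [add_assoc]
  congr 2
  · congr 1
    ext p
    simp only [Finset.mem_filter, Finset.mem_univ, true_and]
    constructor
    · rintro ⟨-, h⟩; exact h
    · intro h; exact ⟨lt_asymm h, h⟩
  · have he : univ.filter (fun p : Fin N × Fin N => ¬ p.1 < p.2 ∧ ¬ p.2 < p.1)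
        = univ.image (fun i : Fin N => (i, i)) := by
      ext p
      simp only [Finset.mem_filter, Finset.mem_univ, true_and, Finset.mem_image]
      constructor
      · rintro ⟨h1, h2⟩
        exact ⟨p.1, by
          rw [Prod.ext_iff]
          exact ⟨rfl, le_antisymm (le_of_not_gt h2) (le_of_not_gt h1)⟩⟩
      · rintro ⟨i, rfl⟩; simp
    rw [he, Finset.sum_image (by intro a _ b _ h; simpa [Prod.ext_iff] using h)]

lemma swap_sum' {N : ℕ} {M : Type*} [AddCommMonoid M] (f : Fin N × Fin N → M) :
    ∑ p ∈ univ.filter (fun p : Fin N × Fin N => p.2 < p.1), f p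
      = ∑ p ∈ univ.filter (fun p : Fin N × Fin N => p.1 < p.2), f p.swap := by
  apply Finset.sum_nbij' (fun p => Prod.swap p) (fun p => Prod.swap p) <;>
    simp [Prod.ext_iff]

lemma card_lt_pairs' (N : ℕ) :
    2 * (univ.filter (fun p : Fin N × Fin N => p.1 < p.2)).card + N = N ^ 2 := by
  have h := split_sum' (N := N) (M := ℕ) (fun _ => 1)
  simp only [Finset.sum_const, smul_eq_mul, mul_one, card_univ, Fintype.card_prod,
    Fintype.card_fin] at h
  have h2 := swap_sum' (N := N) (M := ℕ) (fun _ => 1)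
  simp only [Finset.sum_const, smul_eq_mul, mul_one] at h2
  rw [pow_two, h, h2]
  ring

lemma matVar_eq_re_Fc (ρ A : Matrix (Fin d) (Fin d) ℂ) : matVar ρ A = (Fc ρ A).re := rfl

lemma matVar_neg (ρ X : Matrix (Fin d) (Fin d) ℂ) : matVar ρ (-X) = matVar ρ X := by
  simp only [matVar, Matrix.neg_mul, Matrix.mul_neg, neg_neg, trace_neg, neg_sq]

lemma matVar_sub_symm (ρ X Y : Matrix (Fin d) (Fin d) ℂ) :
    matVar ρ (Y - X) = matVar ρ (X - Y) := by
  rw [← neg_sub X Y, matVar_neg]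

end Aux

theorem variance_uncertainty_ren (d N : ℕ) (hN : 2 ≤ N)
    (ρ : Matrix (Fin d) (Fin d) ℂ) (hρ : ρ.PosSemidef) (hTr : ρ.trace = 1)
    (A : Fin N → Matrix (Fin d) (Fin d) ℂ) (hA : ∀ i, (A i).IsHermitian) :
    ∑ i, matVar ρ (A i) ≥
      (1 / (N : ℝ)) * matVar ρ (∑ i, A i) +
        (2 / ((N : ℝ) ^ 2 * ((N : ℝ) - 1))) *
          (∑ p ∈ univ.filter (fun p : Fin N × Fin N => p.1 < p.2),
            matDev ρ (A p.1 - A p.2)) ^ 2 := by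
  set n : ℝ := (N : ℝ) with hn
  have hn2 : (2 : ℝ) ≤ n := by rw [hn]; exact_mod_cast hN
  set s2 := univ.filter (fun p : Fin N × Fin N => p.1 < p.2) with hs2
  set V : ℝ := ∑ i, matVar ρ (A i) with hV
  set W : ℝ := matVar ρ (∑ i, A i) with hW
  set P : ℝ := ∑ p ∈ s2, matDev ρ (A p.1 - A p.2) with hP
  set Q : ℝ := ∑ p ∈ s2, matVar ρ (A p.1 - A p.2) with hQ
  -- nonnegativity facts
  have hvnn : ∀ p : Fin N × Fin N, 0 ≤ matVar ρ (A p.1 - A p.2) := fun p =>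
    matVar_nonneg' hρ hTr ((hA p.1).sub (hA p.2))
  have hWnn : 0 ≤ W := by
    apply matVar_nonneg' hρ hTr
    unfold Matrix.IsHermitian
    rw [conjTranspose_sum]
    exact Finset.sum_congr rfl (fun i _ => (hA i).eq)
  have hQnn : 0 ≤ Q := Finset.sum_nonneg (fun p _ => hvnn p)
  -- the key identity: 2 * Q = 2 * n * V - 2 * W
  have hkey : 2 * Q = 2 * n * V - 2 * W := by
    have hC := sum_sum_Fc ρ A
    have hre := congrArg Complex.re hC
    rw [Complex.re_sum] at hre
    have hcast : ((2 : ℂ) * (N : ℂ)) = ((2 * n : ℝ) : ℂ) := by rw [hn]; push_cast; ring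
    rw [Complex.sub_re, hcast, Complex.re_ofReal_mul] at hre
    have h2 : ((2 : ℂ) * Fc ρ (∑ i, A i)).re = 2 * W := by
      rw [hW, matVar_eq_re_Fc]
      have : ((2 : ℂ) * Fc ρ (∑ i, A i)) = ((2 : ℝ) : ℂ) * Fc ρ (∑ i, A i) := by push_cast; ring
      rw [this, Complex.re_ofReal_mul]
    rw [h2, Complex.re_sum] at hre
    simp only [← matVar_eq_re_Fc] at hre
    -- now split the LHS of hre
    rw [split_sum' (fun p : Fin N × Fin N => matVar ρ (A p.1 - A p.2)),
      swap_sum' (fun p : Fin N × Fin N => matVar ρ (A p.1 - A p.2))] at hre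
    simp only [Prod.fst_swap, Prod.snd_swap, sub_self] at hre
    have hdiag : ∀ i : Fin N, matVar ρ (A i - A i) = (0 : ℝ) := by
      intro i
      simp [matVar, sub_self]
    have hsymm : ∀ p : Fin N × Fin N, matVar ρ (A p.2 - A p.1) = matVar ρ (A p.1 - A p.2) :=
      fun p => matVar_sub_symm ρ (A p.1) (A p.2)
    have hzero : matVar ρ (0 : Matrix (Fin d) (Fin d) ℂ) = 0 := by simp [matVar]
    simp only [hsymm, hdiag, sub_self, hzero, Finset.sum_const_zero, add_zero] at hre
    rw [← hs2, ← hQ, ← hV] at hre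
    linarith [hre]
  have hQval : Q = n * V - W := by linarith
  -- Cauchy-Schwarz
  have hcard : 2 * (s2.card : ℝ) + n = n ^ 2 := by
    have := card_lt_pairs' N
    rw [hn]
    exact_mod_cast congrArg (Nat.cast : ℕ → ℝ) this
  have hCS : P ^ 2 ≤ (s2.card : ℝ) * Q := by
    have := Finset.sum_mul_sq_le_sq_mul_sq s2 (fun _ => (1 : ℝ))
      (fun p => matDev ρ (A p.1 - A p.2))
    simp only [one_mul, one_pow, Finset.sum_const, nsmul_eq_mul, smul_eq_mul, mul_one] at this
    rw [hP, hQ]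
    calc P ^ 2 ≤ (s2.card : ℝ) * ∑ p ∈ s2, (matDev ρ (A p.1 - A p.2)) ^ 2 := by
          rw [hP]; exact this
      _ = (s2.card : ℝ) * ∑ p ∈ s2, matVar ρ (A p.1 - A p.2) := by
          congr 1
          exact Finset.sum_congr rfl (fun p _ => Real.sq_sqrt (hvnn p))
    -- close rw goals
  have hnpos : (0 : ℝ) < n := by linarith
  have hn1pos : (0 : ℝ) < n - 1 := by linarith
  have hden : (0 : ℝ) < n ^ 2 * (n - 1) := by positivity
  rw [ge_iff_le]
  have hmain : n ^ 2 * (n - 1) * (1 / n * W + 2 / (n ^ 2 * (n - 1)) * P ^ 2)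
      ≤ n ^ 2 * (n - 1) * V := by
    have e : n ^ 2 * (n - 1) * (1 / n * W + 2 / (n ^ 2 * (n - 1)) * P ^ 2)
        = n * (n - 1) * W + 2 * P ^ 2 := by
      field_simp
    rw [e]
    have h3 : 2 * ((s2.card : ℝ) * Q) = (n ^ 2 - n) * Q := by
      have : 2 * (s2.card : ℝ) = n ^ 2 - n := by linarith
      rw [← mul_assoc, this]
    have h4 : n * (n - 1) * W + (n ^ 2 - n) * (n * V - W) = n ^ 2 * (n - 1) * V := by ring
    have h5 : 2 * P ^ 2 ≤ 2 * ((s2.card : ℝ) * Q) := by linarith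
    rw [h3, hQval] at h5
    linarith
  exact le_of_mul_le_mul_left hmain hden
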